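/- Let ω ∈ ℂ \ (−∞, 0], let √ω denote the principal square root, and let f : ℝ → ℂ be a Schwartz function. Define v(x) = (1/(2√ω)) ∫_ℝ e^{−√ω·|x−y|} f(y) dy. Then v is twice continuously differentiable on ℝ and satisfies v''(x) − ω·v(x) = −f(x) for all x ∈ ℝ. -/

import Mathlib

open MeasureTheory Real Complex

open Set in
private lemma conv_aux_integral_Ici_sub_Ici {g : ℝ → ℂ} {a b : ℝ}
    (ha : IntegrableOn g (Ici a)) (hb : IntegrableOn g (Ici b)) :
    (∫ y in Ici a, g y) - (∫ y in Ici b, g y) = ∫ y in a..b, g y := by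
  wlog hab : a ≤ b generalizing a b
  · rw [intervalIntegral.integral_symm, ← this hb ha (le_of_not_ge hab), neg_sub]
  rw [sub_eq_iff_eq_add', ← Ico_union_Ici_eq_Ici hab,
    setIntegral_union (by rw [Set.disjoint_left]; exact fun x hx hx' => hx.2.not_ge hx')
      measurableSet_Ici
      (ha.mono_set (by rw [← Ico_union_Ici_eq_Ici hab]; exact subset_union_left)) hb,
    intervalIntegral.integral_of_le hab, integral_Ico_eq_integral_Ioo,
    integral_Ioc_eq_integral_Ioo]
  exact add_comm _ _

open Set in
/-- For `ω ∈ ℂ \ (−∞,0]` (principal square root `√ω = ω^(1/2)`)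
and a Schwartz function `f`, the convolution
`v(x) = (1/(2√ω)) ∫_ℝ e^{−√ω |x−y|} f(y) dy`
is twice continuously differentiable and satisfies `v'' − ω v = −f` on `ℝ`. -/
theorem convolution_solves_second_order_ode
    (ω : ℂ) (hω : ¬(ω.im = 0 ∧ ω.re ≤ 0)) (f : SchwartzMap ℝ ℂ)
    (v : ℝ → ℂ)
    (hv : ∀ x : ℝ, v x =
      (1 / (2 * ω ^ (1/2 : ℂ))) *
        ∫ y : ℝ, Complex.exp (-(ω ^ (1/2 : ℂ)) * |x - y|) * f y) :
    ContDiff ℝ 2 v ∧ ∀ x : ℝ, deriv (deriv v) x - ω * v x = -f x := by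
  have hω0 : ω ≠ 0 := by rintro rfl; exact hω ⟨rfl, le_rfl⟩
  set s : ℂ := ω ^ (1/2 : ℂ) with hs_def
  -- basic facts about s
  have hs_re : 0 < s.re := by
    rw [hs_def, Complex.cpow_def_of_ne_zero hω0, Complex.exp_re]
    apply mul_pos (Real.exp_pos _)
    have him : ((Complex.log ω) * (1/2)).im = ω.arg / 2 := by
      simp [Complex.mul_im, Complex.log_im]; ring
    rw [him]
    apply Real.cos_pos_of_mem_Ioo
    constructor
    · have := Complex.neg_pi_lt_arg ω
      linarith
    · have h1 := Complex.arg_le_pi ω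
      have h2 : ω.arg ≠ π := by
        intro h
        rcases Complex.arg_eq_pi_iff.mp h with ⟨hre, him'⟩
        exact hω ⟨him', hre.le⟩
      have := lt_of_le_of_ne h1 h2
      linarith
  have hs_sq : s * s = ω := by
    rw [hs_def, ← Complex.cpow_add _ _ hω0]; norm_num
  have hs_ne : s ≠ 0 := by
    intro h; rw [h] at hs_re; simp at hs_re
  -- the two exponential-weighted functions
  set g₁ : ℝ → ℂ := fun y => Complex.exp (s * y) * f y with hg₁_def
  set g₂ : ℝ → ℂ := fun y => Complex.exp (-s * y) * f y with hg₂_def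
  have hg₁_cont : Continuous g₁ :=
    (Complex.continuous_exp.comp (continuous_const.mul Complex.continuous_ofReal)).mul f.continuous
  have hg₂_cont : Continuous g₂ :=
    (Complex.continuous_exp.comp (continuous_const.mul Complex.continuous_ofReal)).mul f.continuous
  have hnorm₁ : ∀ y : ℝ, ‖g₁ y‖ = Real.exp (s.re * y) * ‖f y‖ := by
    intro y
    rw [hg₁_def]
    simp only [norm_mul, Complex.norm_exp]
    congr 2
    simp [Complex.mul_re]
  have hnorm₂ : ∀ y : ℝ, ‖g₂ y‖ = Real.exp (-(s.re * y)) * ‖f y‖ := by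
    intro y
    rw [hg₂_def]
    simp only [norm_mul, Complex.norm_exp]
    congr 2
    simp [Complex.mul_re]
  -- integrability
  have hint₁ : ∀ x : ℝ, IntegrableOn g₁ (Iic x) := by
    intro x
    apply Integrable.mono' ((f.integrable.norm.const_mul (Real.exp (s.re * x))).restrict)
      hg₁_cont.aestronglyMeasurable.restrict
    filter_upwards [ae_restrict_mem measurableSet_Iic] with y (hy : y ≤ x)
    rw [hnorm₁ y]
    have : Real.exp (s.re * y) ≤ Real.exp (s.re * x) :=
      Real.exp_le_exp.mpr (by nlinarith)
    exact mul_le_mul_of_nonneg_right this (norm_nonneg _)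
  have hint₂ : ∀ x : ℝ, IntegrableOn g₂ (Ici x) := by
    intro x
    apply Integrable.mono' ((f.integrable.norm.const_mul (Real.exp (-(s.re * x)))).restrict)
      hg₂_cont.aestronglyMeasurable.restrict
    filter_upwards [ae_restrict_mem measurableSet_Ici] with y (hy : x ≤ y)
    rw [hnorm₂ y]
    have : Real.exp (-(s.re * y)) ≤ Real.exp (-(s.re * x)) :=
      Real.exp_le_exp.mpr (by nlinarith)
    exact mul_le_mul_of_nonneg_right this (norm_nonneg _)
  -- the kernel function and its integrability
  have hker_int : ∀ x : ℝ, Integrable (fun y : ℝ => Complex.exp (-s * |x - y|) * f y) := by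
    intro x
    have hc : Continuous fun y : ℝ => Complex.exp (-s * (|x - y| : ℝ)) * f y := by
      refine Continuous.mul ?_ f.continuous
      exact Continuous.cexp (continuous_const.mul
        (Complex.continuous_ofReal.comp (continuous_const.sub continuous_id).abs))
    apply Integrable.mono' f.integrable.norm hc.aestronglyMeasurable
    filter_upwards with y
    rw [norm_mul]
    have h1 : ‖Complex.exp (-s * (|x - y| : ℝ))‖ ≤ 1 := by
      rw [Complex.norm_exp, Real.exp_le_one_iff]
      have hre : (-s * ((|x - y| : ℝ) : ℂ)).re = -(s.re * |x - y|) := by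
        simp [Complex.mul_re]
      rw [hre]
      have := abs_nonneg (x - y)
      nlinarith
    calc ‖Complex.exp (-s * (|x - y| : ℝ))‖ * ‖(f y : ℂ)‖
        ≤ 1 * ‖(f y : ℂ)‖ := mul_le_mul_of_nonneg_right h1 (norm_nonneg _)
      _ = ‖f y‖ := one_mul _
  -- the two pieces
  set A : ℝ → ℂ := fun x => Complex.exp (-s * x) * ∫ y in Iic x, g₁ y with hA_def
  set B : ℝ → ℂ := fun x => Complex.exp (s * x) * ∫ y in Ici x, g₂ y with hB_def
  -- splitting identity
  have hsplit : ∀ x : ℝ, (∫ y : ℝ, Complex.exp (-s * |x - y|) * f y) = A x + B x := by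
    intro x
    rw [← intervalIntegral.integral_Iic_add_Ioi ((hker_int x).integrableOn) ((hker_int x).integrableOn)]
    congr 1
    · show (∫ y in Iic x, Complex.exp (-s * |x - y|) * f y)
          = Complex.exp (-s * (x:ℂ)) * ∫ y in Iic x, g₁ y
      rw [← integral_const_mul]
      apply setIntegral_congr_fun measurableSet_Iic
      intro y (hy : y ≤ x)
      show Complex.exp (-s * (|x - y| : ℝ)) * f y
          = Complex.exp (-s * (x:ℂ)) * (Complex.exp (s * (y:ℂ)) * f y)
      have habs : |x - y| = x - y := abs_of_nonneg (by linarith)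
      rw [habs, ← mul_assoc, ← Complex.exp_add]
      congr 2
      push_cast
      ring
    · show (∫ y in Ioi x, Complex.exp (-s * |x - y|) * f y)
          = Complex.exp (s * (x:ℂ)) * ∫ y in Ici x, g₂ y
      rw [← integral_Ici_eq_integral_Ioi, ← integral_const_mul]
      apply setIntegral_congr_fun measurableSet_Ici
      intro y (hy : x ≤ y)
      show Complex.exp (-s * (|x - y| : ℝ)) * f y
          = Complex.exp (s * (x:ℂ)) * (Complex.exp (-s * (y:ℂ)) * f y)
      have habs : |x - y| = y - x := by rw [abs_sub_comm]; exact abs_of_nonneg (by linarith)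
      rw [habs, ← mul_assoc, ← Complex.exp_add]
      congr 2
      push_cast
      ring
  have hveq : ∀ x : ℝ, v x = (1 / (2 * s)) * (A x + B x) := by
    intro x; rw [hv x, hsplit x]
  -- derivative of the Iic integral
  have hF : ∀ x : ℝ, HasDerivAt (fun u => ∫ y in Iic u, g₁ y) (g₁ x) x := by
    intro x
    have heq : (fun u => ∫ y in Iic u, g₁ y) =
        fun u => (∫ y in Iic (0:ℝ), g₁ y) + ∫ y in (0:ℝ)..u, g₁ y := by
      funext u
      rw [← intervalIntegral.integral_Iic_sub_Iic (hint₁ 0) (hint₁ u)]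
      ring
    rw [heq]
    exact ((hg₁_cont.integral_hasStrictDerivAt 0 x).hasDerivAt).const_add _
  have hG : ∀ x : ℝ, HasDerivAt (fun u => ∫ y in Ici u, g₂ y) (-g₂ x) x := by
    intro x
    have heq : (fun u => ∫ y in Ici u, g₂ y) =
        fun u => (∫ y in Ici (0:ℝ), g₂ y) - ∫ y in (0:ℝ)..u, g₂ y := by
      funext u
      rw [← conv_aux_integral_Ici_sub_Ici (hint₂ 0) (hint₂ u)]
      ring
    rw [heq]
    exact (((hg₂_cont.integral_hasStrictDerivAt 0 x).hasDerivAt).const_sub _)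
  -- derivative of the exponential factors
  have hexp : ∀ (c : ℂ) (x : ℝ), HasDerivAt (fun u : ℝ => Complex.exp (c * u))
      (c * Complex.exp (c * x)) x := by
    intro c x
    have h1 : HasDerivAt (fun u : ℝ => (u : ℂ)) 1 x := Complex.ofRealCLM.hasDerivAt
    have h2 : HasDerivAt (fun u : ℝ => c * (u : ℂ)) c x := by
      simpa using h1.const_mul c
    simpa [mul_comm] using h2.cexp
  -- derivative of A and B
  have hA' : ∀ x : ℝ, HasDerivAt A (-s * A x + f x) x := by
    intro x
    have hder := ((hexp (-s) x).mul (hF x))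
    convert hder using 1
    · rfl
    · rfl
    have he : Complex.exp (-s * (x:ℂ)) * Complex.exp (s * (x:ℂ)) = 1 := by
      rw [← Complex.exp_add, show -s * (x:ℂ) + s * (x:ℂ) = 0 by ring, Complex.exp_zero]
    rw [hA_def, hg₁_def]
    simp only []
    linear_combination (-(f x)) * he
  have hB' : ∀ x : ℝ, HasDerivAt B (s * B x - f x) x := by
    intro x
    have hder := ((hexp s x).mul (hG x))
    convert hder using 1
    · rfl
    · rfl
    have he : Complex.exp (s * (x:ℂ)) * Complex.exp (-s * (x:ℂ)) = 1 := by
      rw [← Complex.exp_add, show s * (x:ℂ) + -s * (x:ℂ) = 0 by ring, Complex.exp_zero]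
    rw [hB_def, hg₂_def]
    simp only []
    linear_combination (f x) * he
  -- derivative of v
  have hvfun : v = fun x => (1 / (2 * s)) * (A x + B x) := funext hveq
  set w : ℝ → ℂ := fun x => (B x - A x) / 2 with hw_def
  have hv' : ∀ x : ℝ, HasDerivAt v (w x) x := by
    intro x
    rw [hvfun]
    have := ((hA' x).add (hB' x)).const_mul (1 / (2 * s))
    convert this using 1
    · rfl
    · rfl
    rw [hw_def]
    field_simp
    ring
  have hw' : ∀ x : ℝ, HasDerivAt w (ω * v x - f x) x := by
    intro x
    have := ((hB' x).sub (hA' x)).div_const 2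
    convert this using 1
    · rfl
    · rfl
    rw [hveq x, ← hs_sq]
    field_simp
    ring
  have hdv : deriv v = w := funext fun x => (hv' x).deriv
  have hdw : deriv w = fun x => ω * v x - f x := funext fun x => (hw' x).deriv
  have hvdiff : Differentiable ℝ v := fun x => (hv' x).differentiableAt
  have hwdiff : Differentiable ℝ w := fun x => (hw' x).differentiableAt
  constructor
  · have h2 : (2 : WithTop ℕ∞) = 1 + 1 := by norm_num
    rw [h2, contDiff_succ_iff_deriv]
    refine ⟨hvdiff, by simp, ?_⟩
    rw [hdv]
    rw [contDiff_one_iff_deriv]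
    refine ⟨hwdiff, ?_⟩
    rw [hdw]
    exact (continuous_const.mul hvdiff.continuous).sub f.continuous
  · intro x
    rw [hdv, hdw]
    ring
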